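/- Let X₁, X₂, X₃, X₄ be independent, identically distributed random variables taking values in [1, C] for some constant C ≥ 1, and put A := X₁ + X₂ and B := X₃ + X₄. Then E[(A·B/(A+B))²] ≤ (E[X₁])². -/

import Mathlib

open MeasureTheory ProbabilityTheory

lemma int_of_bd {Ω : Type} [MeasurableSpace Ω] (P : Measure Ω) [IsProbabilityMeasure P]
    {C : ℝ} {X : Ω → ℝ} (hm : Measurable X) (hbd : ∀ᵐ ω ∂P, X ω ∈ Set.Icc 1 C) :
    Integrable X P := by
  apply Integrable.mono' (integrable_const C) hm.aestronglyMeasurable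
  filter_upwards [hbd] with ω h
  rw [Real.norm_eq_abs, abs_of_nonneg (by linarith [h.1])]
  exact h.2

theorem stmt13 {Ω : Type} [MeasurableSpace Ω] (P : Measure Ω) [IsProbabilityMeasure P]
    (C : ℝ) (hC : 1 ≤ C) (X₁ X₂ X₃ X₄ : Ω → ℝ)
    (hm1 : Measurable X₁) (hm2 : Measurable X₂) (hm3 : Measurable X₃) (hm4 : Measurable X₄)
    (hindep : iIndepFun ![X₁, X₂, X₃, X₄] P)
    (hid2 : Measure.map X₂ P = Measure.map X₁ P)
    (hid3 : Measure.map X₃ P = Measure.map X₁ P)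
    (hid4 : Measure.map X₄ P = Measure.map X₁ P)
    (hbd1 : ∀ᵐ ω ∂P, X₁ ω ∈ Set.Icc 1 C) (hbd2 : ∀ᵐ ω ∂P, X₂ ω ∈ Set.Icc 1 C)
    (hbd3 : ∀ᵐ ω ∂P, X₃ ω ∈ Set.Icc 1 C) (hbd4 : ∀ᵐ ω ∂P, X₄ ω ∈ Set.Icc 1 C) :
    ∫ ω, ((X₁ ω + X₂ ω) * (X₃ ω + X₄ ω) /
        ((X₁ ω + X₂ ω) + (X₃ ω + X₄ ω))) ^ 2 ∂P ≤ (∫ ω, X₁ ω ∂P) ^ 2 := by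
  have hi1 := int_of_bd P hm1 hbd1
  have hi2 := int_of_bd P hm2 hbd2
  have hi3 := int_of_bd P hm3 hbd3
  have hi4 := int_of_bd P hm4 hbd4
  set A : Ω → ℝ := fun ω => X₁ ω + X₂ ω with hA
  set B : Ω → ℝ := fun ω => X₃ ω + X₄ ω with hB
  have hmA : Measurable A := hm1.add hm2
  have hmB : Measurable B := hm3.add hm4
  have hiA : Integrable A P := hi1.add hi2
  have hiB : Integrable B P := hi3.add hi4
  -- Independence of A and B
  have hmeas : ∀ i, Measurable (![X₁, X₂, X₃, X₄] i) := by
    intro i; fin_cases i <;> simpa using (by assumption : _)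
  have hAB : IndepFun A B P := by
    have := hindep.indepFun_add_add hmeas 0 1 2 3 (by decide) (by decide)
      (by decide) (by decide)
    exact this
  -- pointwise bound
  have hae : ∀ᵐ ω ∂P, (A ω * B ω / (A ω + B ω)) ^ 2 ≤ A ω * B ω / 4 := by
    filter_upwards [hbd1, hbd2, hbd3, hbd4] with ω h1 h2 h3 h4
    have ha : (2:ℝ) ≤ A ω := by simp only [hA]; linarith [h1.1, h2.1]
    have hb : (2:ℝ) ≤ B ω := by simp only [hB]; linarith [h3.1, h4.1]
    rw [div_pow, div_le_div_iff₀ (by positivity) (by norm_num)]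
    nlinarith [sq_nonneg (A ω - B ω), mul_pos (by linarith : (0:ℝ) < A ω) (by linarith : (0:ℝ) < B ω)]
  have hiAB : Integrable (fun ω => A ω * B ω) P := hAB.integrable_mul hiA hiB
  have hiL : Integrable (fun ω => (A ω * B ω / (A ω + B ω)) ^ 2) P := by
    apply Integrable.mono' (hiAB.div_const 4)
    · exact (((hmA.mul hmB).div (hmA.add hmB)).pow_const 2).aestronglyMeasurable
    · filter_upwards [hae] with ω h
      rw [Real.norm_eq_abs, abs_of_nonneg (sq_nonneg _)]
      exact h
  calc ∫ ω, (A ω * B ω / (A ω + B ω)) ^ 2 ∂P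
      ≤ ∫ ω, A ω * B ω / 4 ∂P := integral_mono_ae hiL (hiAB.div_const 4) hae
    _ = (∫ ω, A ω * B ω ∂P) / 4 := integral_div 4 _
    _ = (∫ ω, A ω ∂P) * (∫ ω, B ω ∂P) / 4 := by
        rw [show (fun ω => A ω * B ω) = A * B from rfl,
          hAB.integral_mul_eq_mul_integral hiA.aestronglyMeasurable hiB.aestronglyMeasurable]
    _ = (∫ ω, X₁ ω ∂P) ^ 2 := by
        have e2 : ∫ ω, X₂ ω ∂P = ∫ ω, X₁ ω ∂P := by
          have ha := integral_map (μ:=P) hm2.aemeasurable (f := id) aestronglyMeasurable_id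
          have hb := integral_map (μ:=P) hm1.aemeasurable (f := id) aestronglyMeasurable_id
          simp only [id] at ha hb
          rw [← ha, hid2, hb]
        have e3 : ∫ ω, X₃ ω ∂P = ∫ ω, X₁ ω ∂P := by
          have ha := integral_map (μ:=P) hm3.aemeasurable (f := id) aestronglyMeasurable_id
          have hb := integral_map (μ:=P) hm1.aemeasurable (f := id) aestronglyMeasurable_id
          simp only [id] at ha hb
          rw [← ha, hid3, hb]
        have e4 : ∫ ω, X₄ ω ∂P = ∫ ω, X₁ ω ∂P := by
          have ha := integral_map (μ:=P) hm4.aemeasurable (f := id) aestronglyMeasurable_id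
          have hb := integral_map (μ:=P) hm1.aemeasurable (f := id) aestronglyMeasurable_id
          simp only [id] at ha hb
          rw [← ha, hid4, hb]
        have : ∫ ω, A ω ∂P = 2 * ∫ ω, X₁ ω ∂P := by
          simp only [hA]; rw [integral_add hi1 hi2, e2]; ring
        have hBint : ∫ ω, B ω ∂P = 2 * ∫ ω, X₁ ω ∂P := by
          simp only [hB]; rw [integral_add hi3 hi4, e3, e4]; ring
        rw [this, hBint]; ring
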